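/- The set of coarse p-limited operators from X to Y is a closed subspace of L(X;Y) (closed under norm limits), and is a two-sided operator ideal: if T : X → Y is coarse p-limited, S : Y → Z and R : W → X are bounded, then S∘T and T∘R are coarse p-limited. -/

import Mathlib

open Filter Topology Metric

noncomputable section

/-- The sequence space `ℓ_p` over `ℝ`. -/
abbrev lpS (p : ENNReal) : Type := lp (fun _ : ℕ => ℝ) p

variable {W X Y Z : Type*}

/-- A set `A ⊆ X` is coarse `p`-limited if every bounded operator `T : X → ℓ_p`
maps `A` to a relatively compact subset of `ℓ_p`. -/
def CoarsePLimited (p : ENNReal) [Fact (1 ≤ p)]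
    [NormedAddCommGroup X] [NormedSpace ℝ X] (A : Set X) : Prop :=
  ∀ T : X →L[ℝ] lpS p, IsCompact (closure (T '' A))

/-- A sequence is weakly null if every continuous functional sends it to a null sequence. -/
def WeaklyNull [NormedAddCommGroup X] [NormedSpace ℝ X] (x : ℕ → X) : Prop :=
  ∀ f : X →L[ℝ] ℝ, Tendsto (fun n => f (x n)) atTop (𝓝 0)

/-- A sequence is weakly Cauchy if every continuous functional sends it to a Cauchy sequence. -/
def WeaklyCauchy [NormedAddCommGroup X] [NormedSpace ℝ X] (x : ℕ → X) : Prop :=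
  ∀ f : X →L[ℝ] ℝ, CauchySeq (fun n => f (x n))

/-- A set is conditionally weakly compact if every sequence in it has a weakly
Cauchy subsequence. -/
def CondWeaklyCompact [NormedAddCommGroup X] [NormedSpace ℝ X] (A : Set X) : Prop :=
  ∀ x : ℕ → X, (∀ n, x n ∈ A) → ∃ φ : ℕ → ℕ, StrictMono φ ∧ WeaklyCauchy (x ∘ φ)

/-- A set is relatively weakly compact if its closure in the weak topology is compact. -/
def RelWeaklyCompact [NormedAddCommGroup X] [NormedSpace ℝ X] (A : Set X) : Prop :=
  IsCompact (closure ((toWeakSpaceCLM ℝ X) '' A))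

/-- A Banach space has the coarse `p`-DP* property if every relatively weakly compact
subset is coarse `p`-limited. -/
def CoarsePDPstar (p : ENNReal) [Fact (1 ≤ p)] (X : Type*)
    [NormedAddCommGroup X] [NormedSpace ℝ X] : Prop :=
  ∀ A : Set X, RelWeaklyCompact A → CoarsePLimited p A

/-- A Banach space has the coarse `p`-Gelfand-Phillips property if every coarse
`p`-limited subset is relatively compact. -/
def CoarsePGP (p : ENNReal) [Fact (1 ≤ p)] (X : Type*)
    [NormedAddCommGroup X] [NormedSpace ℝ X] : Prop :=
  ∀ A : Set X, CoarsePLimited p A → IsCompact (closure A)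

/-- A set `A` is limited if every weak*-null sequence of functionals converges to `0`
uniformly on `A`. -/
def LimitedSet [NormedAddCommGroup X] [NormedSpace ℝ X] (A : Set X) : Prop :=
  ∀ f : ℕ → (X →L[ℝ] ℝ), (∀ x : X, Tendsto (fun n => f n x) atTop (𝓝 0)) →
    TendstoUniformlyOn (fun n x => f n x) 0 atTop A

/-- A set `A` is `p`-limited if for every weak* `p`-summable sequence `(f n)` of
functionals there is `a ∈ ℓ_p` with `|f n x| ≤ a n` for all `x ∈ A` and all `n`. -/
def PLimitedSet (p : ENNReal) [NormedAddCommGroup X] [NormedSpace ℝ X] (A : Set X) : Prop :=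
  ∀ f : ℕ → (X →L[ℝ] ℝ), (∀ x : X, Memℓp (fun n => f n x) p) →
    ∃ a : ℕ → ℝ, Memℓp a p ∧ ∀ x ∈ A, ∀ n, |f n x| ≤ a n

/-- A sequence of vectors has norm-null if its norms tend to zero. -/
def NormNull [NormedAddCommGroup X] (x : ℕ → X) : Prop :=
  Tendsto (fun n => ‖x n‖) atTop (𝓝 0)

/-- The Schur property: weakly null sequences are norm null. -/
def SchurProp (X : Type*) [NormedAddCommGroup X] [NormedSpace ℝ X] : Prop :=
  ∀ x : ℕ → X, WeaklyNull x → NormNull x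

/-- A coarse `p`-limited operator: the image of the unit ball is coarse `p`-limited. -/
def CoarsePLimOp (p : ENNReal) [Fact (1 ≤ p)] [NormedAddCommGroup X] [NormedSpace ℝ X]
    [NormedAddCommGroup Y] [NormedSpace ℝ Y] (T : X →L[ℝ] Y) : Prop :=
  CoarsePLimited p (T '' closedBall (0 : X) 1)

/-- A weakly compact operator: the image of the unit ball is relatively weakly compact. -/
def WeaklyCompactOp [NormedAddCommGroup X] [NormedSpace ℝ X]
    [NormedAddCommGroup Y] [NormedSpace ℝ Y] (T : X →L[ℝ] Y) : Prop :=
  RelWeaklyCompact (T '' closedBall (0 : X) 1)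

/-- A compact operator: the image of the unit ball is relatively compact. -/
def CompactOp [NormedAddCommGroup X] [NormedSpace ℝ X]
    [NormedAddCommGroup Y] [NormedSpace ℝ Y] (T : X →L[ℝ] Y) : Prop :=
  IsCompact (closure (T '' closedBall (0 : X) 1))

/-- `X` contains an isomorphic copy of `ℓ₁`. -/
def ContainsL1 (X : Type*) [NormedAddCommGroup X] [NormedSpace ℝ X] : Prop :=
  ∃ T : lpS 1 →L[ℝ] X, ∃ c : ℝ, 0 < c ∧ ∀ v : lpS 1, c * ‖v‖ ≤ ‖T v‖

lemma coarse_op_iff {X Y : Type*} (p : ENNReal) [Fact (1 ≤ p)]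
    [NormedAddCommGroup X] [NormedSpace ℝ X]
    [NormedAddCommGroup Y] [NormedSpace ℝ Y] (T : X →L[ℝ] Y) :
    CoarsePLimOp p T ↔ ∀ U : Y →L[ℝ] lpS p, IsCompactOperator (⇑U ∘ ⇑T) := by
  unfold CoarsePLimOp CoarsePLimited
  have key : ∀ U : Y →L[ℝ] lpS p,
      IsCompactOperator (⇑U ∘ ⇑T) ↔ IsCompact (closure (U '' (T '' closedBall (0:X) 1))) := by
    intro U
    have h := isCompactOperator_iff_isCompact_closure_image_closedBall
      ((U.comp T) : X →ₗ[ℝ] lpS p) (r := 1) one_pos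
    simpa [Function.comp, Set.image_image] using h
  exact ⟨fun h U => (key U).mpr (h U), fun h U => (key U).mp (h U)⟩

theorem stmt17 (p : ENNReal) [Fact (1 ≤ p)] (hp : p ≠ ⊤)
    [NormedAddCommGroup W] [NormedSpace ℝ W] [CompleteSpace W]
    [NormedAddCommGroup X] [NormedSpace ℝ X] [CompleteSpace X]
    [NormedAddCommGroup Y] [NormedSpace ℝ Y] [CompleteSpace Y]
    [NormedAddCommGroup Z] [NormedSpace ℝ Z] [CompleteSpace Z] :
    (CoarsePLimOp p (0 : X →L[ℝ] Y)) ∧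
    (∀ T S : X →L[ℝ] Y, CoarsePLimOp p T → CoarsePLimOp p S → CoarsePLimOp p (T + S)) ∧
    (∀ (c : ℝ) (T : X →L[ℝ] Y), CoarsePLimOp p T → CoarsePLimOp p (c • T)) ∧
    (∀ (T : ℕ → X →L[ℝ] Y) (T₀ : X →L[ℝ] Y), (∀ n, CoarsePLimOp p (T n)) →
      Tendsto T atTop (𝓝 T₀) → CoarsePLimOp p T₀) ∧
    (∀ (T : X →L[ℝ] Y) (S : Y →L[ℝ] Z), CoarsePLimOp p T → CoarsePLimOp p (S.comp T)) ∧
    (∀ (T : X →L[ℝ] Y) (R : W →L[ℝ] X), CoarsePLimOp p T → CoarsePLimOp p (T.comp R)) := by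
  refine ⟨?_, ?_, ?_, ?_, ?_, ?_⟩
  · rw [coarse_op_iff]
    intro U
    have : (⇑U ∘ ⇑(0 : X →L[ℝ] Y)) = (0 : X → lpS p) := by
      funext x; simp
    rw [this]
    exact isCompactOperator_zero
  · intro T S hT hS
    rw [coarse_op_iff] at hT hS ⊢
    intro U
    have : (⇑U ∘ ⇑(T + S)) = (⇑U ∘ ⇑T) + (⇑U ∘ ⇑S) := by
      funext x; simp
    rw [this]
    exact (hT U).add (hS U)
  · intro c T hT
    rw [coarse_op_iff] at hT ⊢
    intro U
    have : (⇑U ∘ ⇑(c • T)) = c • (⇑U ∘ ⇑T) := by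
      funext x; simp
    rw [this]
    exact (hT U).smul c
  · intro T T₀ hT hlim
    rw [coarse_op_iff]
    intro U
    have hF : ∀ n, IsCompactOperator (⇑(U.comp (T n))) := by
      intro n
      have := (coarse_op_iff p (T n)).mp (hT n) U
      exact this
    have htend : Tendsto (fun n => U.comp (T n)) atTop (𝓝 (U.comp T₀)) := by
      have hc : Continuous fun A : X →L[ℝ] Y => U.comp A :=
        ((ContinuousLinearMap.compL ℝ X Y (lpS p)) U).continuous
      exact (hc.tendsto T₀).comp hlim
    have := isCompactOperator_of_tendsto htend (Eventually.of_forall hF)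
    exact this
  · intro T S hT
    rw [coarse_op_iff] at hT ⊢
    intro U
    have : (⇑U ∘ ⇑(S.comp T)) = (⇑(U.comp S) ∘ ⇑T) := by
      funext x; simp
    rw [this]
    exact hT (U.comp S)
  · intro T R hT
    rw [coarse_op_iff] at hT ⊢
    intro U
    have : (⇑U ∘ ⇑(T.comp R)) = (⇑U ∘ ⇑T) ∘ ⇑R := by
      funext x; simp
    rw [this]
    exact (hT U).comp_clm R
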